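/- Let P be an orthogonal projection and U a unitary operator on a Hilbert space F. Then the multiplication operator M_{U(P^⊥ + zP)} acting on the vector-valued Hardy space H²(F), given by (M f)(z) = U(P^⊥ + zP) f(z), is an isometry. -/

import Mathlib

open ContinuousLinearMap
open scoped ENNReal

/-- Let `P` be an orthogonal projection and `U` a unitary on a Hilbert space `F`. The
multiplication operator `M_{U(P^⊥ + zP)}` on the Hardy space `H²(F)` (modelled as
`ℓ²(ℕ, F)` of Taylor coefficients, acting by `(Mf)₀ = UP^⊥f₀`,
`(Mf)ₙ₊₁ = UP^⊥fₙ₊₁ + UPfₙ`) is an isometry. -/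
theorem stmt7 {F : Type*} [NormedAddCommGroup F] [InnerProductSpace ℂ F] [CompleteSpace F]
    (U P : F →L[ℂ] F)
    (hPidem : P * P = P) (hPsa : IsSelfAdjoint P)
    (hU1 : adjoint U * U = 1) (hU2 : U * adjoint U = 1)
    (M : lp (fun _ : ℕ => F) 2 →L[ℂ] lp (fun _ : ℕ => F) 2)
    (hM0 : ∀ f : lp (fun _ : ℕ => F) 2, (M f) 0 = U ((1 - P) (f 0)))
    (hMs : ∀ (f : lp (fun _ : ℕ => F) 2) (n : ℕ),
      (M f) (n + 1) = U ((1 - P) (f (n + 1))) + U (P (f n))) :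
    ∀ f : lp (fun _ : ℕ => F) 2, ‖M f‖ = ‖f‖ := by
  -- basic inner product facts
  have hUinner : ∀ x y : F, inner (𝕜 := ℂ) (U x) (U y) = inner (𝕜 := ℂ) x y := by
    intro x y
    rw [← adjoint_inner_right, ← ContinuousLinearMap.mul_apply, hU1,
      ContinuousLinearMap.one_apply]
  have hPinner : ∀ x y : F, inner (𝕜 := ℂ) (P x) y = inner (𝕜 := ℂ) x (P y) := by
    intro x y
    conv_lhs => rw [← hPsa.adjoint_eq]
    rw [adjoint_inner_left]
  have hcross : ∀ x y : F, inner (𝕜 := ℂ) ((1 - P) x) (P y) = 0 := by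
    intro x y
    have hPP : P (P y) = P y := by rw [← ContinuousLinearMap.mul_apply, hPidem]
    rw [ContinuousLinearMap.sub_apply, ContinuousLinearMap.one_apply, inner_sub_left,
      hPinner x (P y), hPP, sub_self]
  have hcross' : ∀ x y : F, inner (𝕜 := ℂ) (P y) ((1 - P) x) = 0 := by
    intro x y
    rw [← inner_conj_symm, hcross, map_zero]
  -- Pythagoras: ⟪x,x⟫ = ⟪(1-P)x,(1-P)x⟫ + ⟪Px,Px⟫
  have hpyth : ∀ x : F, inner (𝕜 := ℂ) x x =
      inner (𝕜 := ℂ) ((1 - P) x) ((1 - P) x) + inner (𝕜 := ℂ) (P x) (P x) := by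
    intro x
    have hx : x = (1 - P) x + P x := by
      simp [ContinuousLinearMap.sub_apply]
    conv_lhs => rw [hx]
    rw [inner_add_add_self, hcross, hcross', add_zero, add_zero]
  -- the key pointwise identity
  have hkey : ∀ x y : F, inner (𝕜 := ℂ) (U ((1 - P) x) + U (P y)) (U ((1 - P) x) + U (P y)) =
      inner (𝕜 := ℂ) ((1 - P) x) ((1 - P) x) + inner (𝕜 := ℂ) (P y) (P y) := by
    intro x y
    simp only [inner_add_add_self, hUinner]
    rw [hcross, hcross', add_zero, add_zero]
  intro f
  -- sequences of inner products
  set q : ℕ → ℂ := fun n => inner (𝕜 := ℂ) ((1 - P) (f n)) ((1 - P) (f n)) with hq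
  set p : ℕ → ℂ := fun n => inner (𝕜 := ℂ) (P (f n)) (P (f n)) with hp
  have hb : Summable (fun n => inner (𝕜 := ℂ) (f n) (f n)) := lp.summable_inner f f
  -- summability of q and p by comparison with real norms
  have hnorm_split : ∀ n, ‖(1 - P) (f n)‖ ^ 2 + ‖P (f n)‖ ^ 2 = ‖f n‖ ^ 2 := by
    intro n
    have h := hpyth (f n)
    rw [inner_self_eq_norm_sq_to_K, inner_self_eq_norm_sq_to_K, inner_self_eq_norm_sq_to_K] at h
    exact_mod_cast h.symm
  have hsumnorm : Summable (fun n => ‖f n‖ ^ 2) := by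
    have hb' : Summable (fun n => ((‖f n‖ ^ 2 : ℝ) : ℂ)) := by
      refine hb.congr fun n => ?_
      rw [inner_self_eq_norm_sq_to_K]; push_cast; rfl
    exact Complex.summable_ofReal.mp hb' 
  have hsq : Summable q := by
    rw [show q = fun n => ((‖(1 - P) (f n)‖ ^ 2 : ℝ) : ℂ) by
      funext n; show inner ℂ _ _ = _
      rw [inner_self_eq_norm_sq_to_K]; push_cast; rfl]
    rw [Complex.summable_ofReal]
    refine Summable.of_nonneg_of_le (fun n => by positivity) (fun n => ?_) hsumnorm
    nlinarith [hnorm_split n, sq_nonneg ‖P (f n)‖]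
  have hsp : Summable p := by
    rw [show p = fun n => ((‖P (f n)‖ ^ 2 : ℝ) : ℂ) by
      funext n; show inner ℂ _ _ = _
      rw [inner_self_eq_norm_sq_to_K]; push_cast; rfl]
    rw [Complex.summable_ofReal]
    refine Summable.of_nonneg_of_le (fun n => by positivity) (fun n => ?_) hsumnorm
    nlinarith [hnorm_split n, sq_nonneg ‖(1 - P) (f n)‖]
  obtain ⟨Q, hQ⟩ := hsq
  obtain ⟨Pv, hPv⟩ := hsp
  -- ⟪f, f⟫ = Q + Pv
  have hfsum : inner (𝕜 := ℂ) f f = Q + Pv := by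
    have h1 : HasSum (fun n => inner (𝕜 := ℂ) (f n) (f n)) (Q + Pv) := by
      have := hQ.add hPv
      refine this.congr_fun fun n => ?_
      exact hpyth (f n)
    exact (lp.hasSum_inner f f).unique h1
  -- shifted p
  set p' : ℕ → ℂ := fun n => Nat.rec 0 (fun m _ => p m) n with hp'
  have hp'sum : HasSum p' Pv := by
    have h1 : HasSum (fun n => p' (n + 1)) (Pv - ∑ i ∈ Finset.range 1, p' i) := by
      simpa [hp'] using hPv
    exact (hasSum_nat_add_iff' 1).mp h1
  -- ⟪Mf, Mf⟫ = Q + Pv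
  have hMsum : inner (𝕜 := ℂ) (M f) (M f) = Q + Pv := by
    have h1 : HasSum (fun n => inner (𝕜 := ℂ) ((M f) n) ((M f) n)) (Q + Pv) := by
      have := hQ.add hp'sum
      refine this.congr_fun fun n => ?_
      cases n with
      | zero =>
        show inner ℂ ((M f) 0) ((M f) 0) = q 0 + (0 : ℂ)
        rw [hM0 f, hUinner, add_zero]
      | succ m =>
        show inner ℂ ((M f) (m + 1)) ((M f) (m + 1)) = q (m + 1) + p m
        rw [hMs f m]
        exact hkey (f (m + 1)) (f m)
    exact (lp.hasSum_inner (M f) (M f)).unique h1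
  -- conclude
  have h2 : ‖M f‖ ^ 2 = ‖f‖ ^ 2 := by
    have h := hMsum.trans hfsum.symm
    rw [inner_self_eq_norm_sq_to_K, inner_self_eq_norm_sq_to_K] at h
    exact_mod_cast h
  have := congrArg Real.sqrt h2
  rwa [Real.sqrt_sq (norm_nonneg _), Real.sqrt_sq (norm_nonneg _)] at this
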